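/- For integers k ≥ 0 and n ≥ l ≥ k+1, op_{n+1,k+1,=l+1}^{k+2} = op_{n,k,=l}^{k+1} + op_{n,k+1,=l}^{k+1} + op_{n,k+1,=l}^{k+2}. -/

import Mathlib

/-- The first unoccupied parking space `j` with `p ≤ j ≤ n`, if any. -/
def firstFree (n : ℕ) (occ : Finset ℕ) (p : ℕ) : Option ℕ :=
  (List.range' p (n + 1 - p)).find? (fun j => decide (j ∉ occ))

/-- Number of cars that fail to park, processing the preference list in order,
given the set of already occupied spaces. -/
def flawsFrom (n : ℕ) : List ℕ → Finset ℕ → ℕ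
  | [], _ => 0
  | p :: rest, occ =>
    match firstFree n occ p with
    | none => flawsFrom n rest occ + 1
    | some j => flawsFrom n rest (insert j occ)

/-- The number of flaws (unparked cars) of a preference list of length `n`. -/
def flaws (n : ℕ) (a : List ℕ) : ℕ := flawsFrom n a ∅

/-- A preference set of length `n`: a list of length `n` with entries in `{1, …, n}`. -/
def IsPrefSet (n : ℕ) (a : List ℕ) : Prop :=
  a.length = n ∧ ∀ x ∈ a, 1 ≤ x ∧ x ≤ n

/-- An ordered preference set of length `n`: a nondecreasing preference set. -/
def IsOrderedPrefSet (n : ℕ) (a : List ℕ) : Prop :=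
  IsPrefSet n a ∧ a.Pairwise (· ≤ ·)

/-- `op_{n,≥k}`: number of ordered preference sets of length `n` with at least `k` flaws. -/
noncomputable def opGe (n k : ℕ) : ℕ :=
  {a : List ℕ | IsOrderedPrefSet n a ∧ k ≤ flaws n a}.ncard

/-- `op_{n,≤k}`: number of ordered preference sets of length `n` with at most `k` flaws. -/
noncomputable def opLe (n k : ℕ) : ℕ :=
  {a : List ℕ | IsOrderedPrefSet n a ∧ flaws n a ≤ k}.ncard

/-- `op_{n,k}`: number of ordered preference sets of length `n` with exactly `k` flaws. -/
noncomputable def opEq (n k : ℕ) : ℕ :=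
  {a : List ℕ | IsOrderedPrefSet n a ∧ flaws n a = k}.ncard

/-- `op_{n,≥k,≤l}`: at least `k` flaws, every entry at most `l`. -/
noncomputable def opGeLe (n k l : ℕ) : ℕ :=
  {a : List ℕ | IsOrderedPrefSet n a ∧ k ≤ flaws n a ∧ ∀ x ∈ a, x ≤ l}.ncard

/-- `op_{n,≥k,≤l}^m`: at least `k` flaws, every entry at most `l`, leading term `m`. -/
noncomputable def opGeLeLead (n k l m : ℕ) : ℕ :=
  {a : List ℕ | IsOrderedPrefSet n a ∧ k ≤ flaws n a ∧ (∀ x ∈ a, x ≤ l) ∧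
    a.head? = some m}.ncard

/-- `op_{n,k,≤l}^m`: exactly `k` flaws, every entry at most `l`, leading term `m`. -/
noncomputable def opEqLeLead (n k l m : ℕ) : ℕ :=
  {a : List ℕ | IsOrderedPrefSet n a ∧ flaws n a = k ∧ (∀ x ∈ a, x ≤ l) ∧
    a.head? = some m}.ncard

/-- `op_{n,k}^m`: exactly `k` flaws, leading term `m`. -/
noncomputable def opLead (n k m : ℕ) : ℕ :=
  {a : List ℕ | IsOrderedPrefSet n a ∧ flaws n a = k ∧ a.head? = some m}.ncard

/-- `op_{n,k,=l}^m`: exactly `k` flaws, maximal entry exactly `l`, leading term `m`. -/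
noncomputable def opMaxLead (n k l m : ℕ) : ℕ :=
  {a : List ℕ | IsOrderedPrefSet n a ∧ flaws n a = k ∧ (∀ x ∈ a, x ≤ l) ∧ l ∈ a ∧
    a.head? = some m}.ncard

/-- Binomial coefficient `C(a, b)` with an integer lower index, which is `0`
when `b < 0` (the standard convention). -/
def chooseInt (a : ℕ) (b : ℤ) : ℕ := if 0 ≤ b then a.choose b.toNat else 0

/-- Idealized parking process for sorted lists: `t` is the last filled spot
of the top occupied interval. -/
def flawsT (n : ℕ) : List ℕ → ℕ → ℕ
  | [], _ => 0
  | p :: rest, t =>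
    if max p (t + 1) ≤ n then flawsT n rest (max p (t + 1)) else rest.length + 1

lemma find?_range'_eq (occ : Finset ℕ) (t : ℕ) :
    ∀ (len s : ℕ), (∀ j, s ≤ j → j < s + len → (j ∈ occ ↔ j ≤ t)) →
    (List.range' s len).find? (fun j => decide (j ∉ occ)) =
      if max s (t + 1) < s + len then some (max s (t + 1)) else none := by
  intro len
  induction len with
  | zero =>
    intro s h
    simp only [List.range'_zero, List.find?_nil]
    rw [if_neg (by omega)]
  | succ m ih =>
    intro s h
    rw [List.range'_succ]
    rcases le_or_gt s t with hst | hts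
    · have hs : s ∈ occ := (h s le_rfl (by omega)).mpr hst
      rw [List.find?_cons_of_neg (by simp [hs])]
      rw [ih (s + 1) (fun j h1 h2 => h j (by omega) (by omega))]
      have h1 : max (s + 1) (t + 1) = max s (t + 1) := by omega
      have h2 : s + 1 + m = s + (m + 1) := by omega
      rw [h1, h2]
    · have hs : s ∉ occ := fun hmem => by
        have := (h s le_rfl (by omega)).mp hmem; omega
      rw [List.find?_cons_of_pos (by simp [hs])]
      have h1 : max s (t + 1) = s := by omega
      rw [h1, if_pos (by omega)]

lemma firstFree_eq (n : ℕ) (occ : Finset ℕ) (p t : ℕ)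
    (h : ∀ j, p ≤ j → (j ∈ occ ↔ j ≤ t)) :
    firstFree n occ p = if max p (t + 1) ≤ n then some (max p (t + 1)) else none := by
  unfold firstFree
  rcases le_or_gt p n with hpn | hnp
  · rw [find?_range'_eq occ t _ p (fun j h1 _ => h j h1)]
    have h2 : p + (n + 1 - p) = n + 1 := by omega
    rw [h2]
    by_cases hc : max p (t + 1) ≤ n
    · rw [if_pos (by omega), if_pos hc]
    · rw [if_neg (by omega), if_neg hc]
  · have h0 : n + 1 - p = 0 := by omega
    rw [h0]
    simp only [List.range'_zero, List.find?_nil]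
    rw [if_neg (by omega)]

lemma flawsFrom_all_none (n : ℕ) (occ : Finset ℕ) :
    ∀ a : List ℕ, (∀ q ∈ a, firstFree n occ q = none) → flawsFrom n a occ = a.length := by
  intro a
  induction a with
  | nil => intro _; rfl
  | cons p rest ih =>
    intro h
    have h1 : flawsFrom n (p :: rest) occ
        = match firstFree n occ p with
          | none => flawsFrom n rest occ + 1
          | some j => flawsFrom n rest (insert j occ) := rfl
    rw [h1, h p (by simp)]
    simp [ih (fun q hq => h q (by simp [hq]))]

lemma flawsFrom_eq_flawsT (n : ℕ) :
    ∀ (a : List ℕ) (occ : Finset ℕ) (c t : ℕ), a.Pairwise (· ≤ ·) →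
      (∀ x ∈ a, c ≤ x) → (∀ j, c ≤ j → (j ∈ occ ↔ j ≤ t)) →
      flawsFrom n a occ = flawsT n a t := by
  intro a
  induction a with
  | nil => intro occ c t _ _ _; rfl
  | cons p rest ih =>
    intro occ c t hsort hlow hocc
    have hp : c ≤ p := hlow p (by simp)
    have hrest : ∀ x ∈ rest, p ≤ x := fun x hx => List.rel_of_pairwise_cons hsort hx
    have hocc' : ∀ j, p ≤ j → (j ∈ occ ↔ j ≤ t) := fun j hj => hocc j (le_trans hp hj)
    have hff : firstFree n occ p
        = if max p (t + 1) ≤ n then some (max p (t + 1)) else none :=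
      firstFree_eq n occ p t hocc'
    have h1 : flawsFrom n (p :: rest) occ
        = match firstFree n occ p with
          | none => flawsFrom n rest occ + 1
          | some j => flawsFrom n rest (insert j occ) := rfl
    by_cases hc : max p (t + 1) ≤ n
    · have hstep : flawsFrom n (p :: rest) occ
          = flawsFrom n rest (insert (max p (t + 1)) occ) := by
        rw [h1, hff, if_pos hc]
      rw [hstep]
      have hT : flawsT n (p :: rest) t = flawsT n rest (max p (t + 1)) := by
        simp only [flawsT]; rw [if_pos hc]
      rw [hT]
      exact ih (insert (max p (t + 1)) occ) p (max p (t + 1))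
        hsort.of_cons hrest
        (fun j hj => by
          rw [Finset.mem_insert]
          constructor
          · rintro (rfl | hj2)
            · exact le_refl _
            · have := (hocc' j hj).mp hj2; omega
          · intro hj2
            rcases Nat.lt_or_ge t j with h3 | h3
            · left; omega
            · right; exact (hocc' j hj).mpr h3)
    · have hstep : flawsFrom n (p :: rest) occ = flawsFrom n rest occ + 1 := by
        rw [h1, hff, if_neg hc]
      rw [hstep]
      have hT : flawsT n (p :: rest) t = rest.length + 1 := by
        simp only [flawsT]; rw [if_neg hc]
      rw [hT]
      rw [flawsFrom_all_none n occ rest (fun q hq => by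
        rw [firstFree_eq n occ q t (fun j hj => hocc' j (le_trans (hrest q hq) hj))]
        rw [if_neg (by have := hrest q hq; omega)])]

lemma flaws_eq_flawsT (n : ℕ) (a : List ℕ) (hs : a.Pairwise (· ≤ ·))
    (h1 : ∀ x ∈ a, 1 ≤ x) : flaws n a = flawsT n a 0 :=
  flawsFrom_eq_flawsT n a ∅ 1 0 hs h1 (fun j hj => by simp; omega)

lemma flawsT_congr_low (n : ℕ) (a : List ℕ) (t1 t2 : ℕ) (h12 : t1 ≤ t2)
    (h : ∀ x ∈ a, t2 < x) : flawsT n a t1 = flawsT n a t2 := by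
  cases a with
  | nil => rfl
  | cons p rest =>
    have hp : t2 < p := h p (by simp)
    have e1 : max p (t1 + 1) = p := by omega
    have e2 : max p (t2 + 1) = p := by omega
    simp only [flawsT, e1, e2]

lemma flawsT_le_length (n : ℕ) : ∀ (a : List ℕ) (t : ℕ), flawsT n a t ≤ a.length := by
  intro a
  induction a with
  | nil => intro t; exact le_refl _
  | cons p rest ih =>
    intro t
    simp only [flawsT]
    by_cases hc : max p (t + 1) ≤ n
    · rw [if_pos hc]
      exact le_trans (ih _) (by simp)
    · rw [if_neg hc]; simp

lemma flawsT_mono (n : ℕ) : ∀ (a : List ℕ) (t t' : ℕ), t ≤ t' →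
    flawsT n a t ≤ flawsT n a t' := by
  intro a
  induction a with
  | nil => intro _ _ _; exact le_refl _
  | cons p rest ih =>
    intro t t' htt
    have hmm : max p (t + 1) ≤ max p (t' + 1) := by omega
    simp only [flawsT]
    by_cases hc' : max p (t' + 1) ≤ n
    · rw [if_pos hc', if_pos (le_trans hmm hc')]
      exact ih _ _ hmm
    · rw [if_neg hc']
      by_cases hc : max p (t + 1) ≤ n
      · rw [if_pos hc]
        exact le_trans (flawsT_le_length n rest _) (by simp)
      · rw [if_neg hc]

lemma flawsT_lower (n : ℕ) : ∀ (a : List ℕ) (t : ℕ), t ≤ n →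
    a.length + t ≤ n + flawsT n a t := by
  intro a
  induction a with
  | nil => intro t ht; simpa [flawsT] using ht
  | cons p rest ih =>
    intro t ht
    simp only [flawsT]
    by_cases hc : max p (t + 1) ≤ n
    · rw [if_pos hc]
      have := ih (max p (t + 1)) hc
      simp only [List.length_cons]
      omega
    · rw [if_neg hc]
      simp only [List.length_cons]
      omega

lemma flawsT_le_max (n : ℕ) : ∀ (a : List ℕ) (t t' m : ℕ), t ≤ t' → t' ≤ n →
    a.length + t' ≤ n + m → flawsT n a t' ≤ max (flawsT n a t) m := by
  intro a
  induction a with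
  | nil => intro t t' m _ _ _; simp [flawsT]
  | cons p rest ih =>
    intro t t' m htt ht'n hm
    have hmm : max p (t + 1) ≤ max p (t' + 1) := by omega
    rcases eq_or_lt_of_le hmm with heq | hlt
    · have : flawsT n (p :: rest) t = flawsT n (p :: rest) t' := by
        simp only [flawsT, heq]
      rw [← this]
      exact le_max_left _ _
    · have hmx : max p (t' + 1) = t' + 1 := by omega
      by_cases hc' : max p (t' + 1) ≤ n
      · have hc : max p (t + 1) ≤ n := le_trans hmm hc'
        have h1 : flawsT n (p :: rest) t' = flawsT n rest (max p (t' + 1)) := by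
          simp only [flawsT]; rw [if_pos hc']
        have h2 : flawsT n (p :: rest) t = flawsT n rest (max p (t + 1)) := by
          simp only [flawsT]; rw [if_pos hc]
        rw [h1, h2]
        exact ih (max p (t + 1)) (max p (t' + 1)) m hmm hc'
          (by simp only [List.length_cons] at hm; omega)
      · have h1 : flawsT n (p :: rest) t' = rest.length + 1 := by
          simp only [flawsT]; rw [if_neg hc']
        rw [h1]
        have : rest.length + 1 ≤ m := by
          simp only [List.length_cons] at hm; omega
        exact le_trans this (le_max_right _ _)

lemma flawsT_map_succ (n : ℕ) : ∀ (a : List ℕ) (t : ℕ),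
    flawsT (n + 1) (a.map (fun x => x + 1)) (t + 1) = flawsT n a t := by
  intro a
  induction a with
  | nil => intro t; rfl
  | cons p rest ih =>
    intro t
    simp only [List.map_cons, flawsT]
    have e1 : max (p + 1) (t + 1 + 1) = max p (t + 1) + 1 := by omega
    rw [e1]
    by_cases hc : max p (t + 1) ≤ n
    · rw [if_pos (by omega), if_pos hc]
      exact ih _
    · rw [if_neg (by omega), if_neg hc]
      simp

lemma sorted_all_ge (a : List ℕ) (m : ℕ) (hs : a.Pairwise (· ≤ ·))
    (hh : a.head? = some m) : ∀ x ∈ a, m ≤ x := by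
  cases a with
  | nil => simp at hh
  | cons p rest =>
    have hp : p = m := by simpa using hh
    subst hp
    intro x hx
    rcases List.mem_cons.mp hx with rfl | hx
    · exact le_refl _
    · exact List.rel_of_pairwise_cons hs hx

lemma finite_bdd (N : ℕ) : ∀ m : ℕ, {l : List ℕ | l.length = m ∧ ∀ x ∈ l, x ≤ N}.Finite := by
  intro m
  induction m with
  | zero =>
    apply Set.Finite.subset (Set.finite_singleton ([] : List ℕ))
    rintro l ⟨h, -⟩
    simp [List.length_eq_zero_iff.mp h]
  | succ m ih =>
    apply Set.Finite.subset (Set.Finite.image2 List.cons (Set.finite_Iic N) ih)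
    rintro l ⟨hlen, hb⟩
    cases l with
    | nil => simp at hlen
    | cons x xs =>
      exact ⟨x, hb x (by simp), xs, ⟨by simpa using hlen, fun y hy => hb y (by simp [hy])⟩, rfl⟩

lemma flaws_cons_map (n k : ℕ) (b : List ℕ) (hs : b.Pairwise (· ≤ ·))
    (hb : ∀ x ∈ b, k + 1 ≤ x) (hkn : k + 1 ≤ n) :
    flaws (n + 1) ((k + 2) :: b.map (fun x => x + 1)) = flawsT n b (k + 1) := by
  have hs2 : ((k + 2) :: b.map (fun x => x + 1)).Pairwise (· ≤ ·) := by
    rw [List.pairwise_cons]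
    constructor
    · intro y hy
      rcases List.mem_map.mp hy with ⟨x, hx, rfl⟩
      have := hb x hx; omega
    · exact List.Pairwise.map _ (fun a b h => by omega) hs
  rw [flaws_eq_flawsT (n + 1) _ hs2 (fun x hx => by
    rcases List.mem_cons.mp hx with rfl | hx
    · omega
    · rcases List.mem_map.mp hx with ⟨y, _, rfl⟩; omega)]
  have h1 : flawsT (n + 1) ((k + 2) :: b.map (fun x => x + 1)) 0
      = flawsT (n + 1) (b.map (fun x => x + 1)) (k + 2) := by
    have e1 : max (k + 2) (0 + 1) = k + 2 := by omega
    simp only [flawsT, e1]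
    rw [if_pos (by omega)]
  rw [h1]
  exact flawsT_map_succ n b (k + 1)

def eMap (k : ℕ) (b : List ℕ) : List ℕ := (k + 2) :: b.map (fun x => x + 1)

def oSet (n l f m : ℕ) : Set (List ℕ) :=
  {b : List ℕ | IsOrderedPrefSet n b ∧ flaws n b = f ∧ (∀ x ∈ b, x ≤ l) ∧ l ∈ b ∧
    b.head? = some m}

theorem stmt15 (n k l : ℕ) (hl : k + 1 ≤ l) (hn : l ≤ n) :
    opMaxLead (n + 1) (k + 1) (l + 1) (k + 2)
      = opMaxLead n k l (k + 1) + opMaxLead n (k + 1) l (k + 1)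
        + opMaxLead n (k + 1) l (k + 2) := by
  classical
  have hkn : k + 1 ≤ n := le_trans hl hn
  -- forward inclusion
  have hfwd : oSet (n+1) (l+1) (k+1) (k+2)
      ⊆ eMap k '' (oSet n l k (k+1) ∪ oSet n l (k+1) (k+1) ∪ oSet n l (k+1) (k+2)) := by
    rintro a ⟨⟨⟨hlen, hbd⟩, hsort⟩, hfl, hle, hmem, hhead⟩
    cases a with
    | nil => simp at hhead
    | cons p tail =>
      have hp : p = k + 2 := by simpa using hhead
      subst hp
      have hall : ∀ x ∈ (k+2) :: tail, k + 2 ≤ x := sorted_all_ge _ _ hsort hhead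
      have htail_all : ∀ x ∈ tail, k + 2 ≤ x := fun x hx => hall x (List.mem_cons_of_mem _ hx)
      set b : List ℕ := tail.map (fun x => x - 1) with hbdef
      have hback : b.map (fun x => x + 1) = tail := by
        rw [hbdef, List.map_map]
        rw [List.map_congr_left (g := id) (fun x hx => by
          have := htail_all x hx; simp; omega)]
        exact List.map_id tail
      have hbs : b.Pairwise (· ≤ ·) :=
        List.Pairwise.map _ (fun u v h => by omega) hsort.of_cons
      have htlen : tail.length = n := by simpa using hlen
      have hblen : b.length = n := by rw [hbdef, List.length_map, htlen]
      have hblow : ∀ x ∈ b, k + 1 ≤ x := by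
        intro x hx; rcases List.mem_map.mp hx with ⟨y, hy, rfl⟩
        have := htail_all y hy; omega
      have hbhigh : ∀ x ∈ b, x ≤ l := by
        intro x hx; rcases List.mem_map.mp hx with ⟨y, hy, rfl⟩
        have := hle y (List.mem_cons_of_mem _ hy); omega
      have htl : l + 1 ∈ tail := by
        rcases List.mem_cons.mp hmem with heq | h
        · cases tail with
          | nil => exfalso; simp at htlen; omega
          | cons q qs =>
            have h1 := htail_all q (by simp)
            have h2 := hle q (by simp)
            have hq : q = l + 1 := by omega
            rw [← hq]; simp
        · exact h
      have hbmem : l ∈ b := by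
        rw [hbdef]; exact List.mem_map.mpr ⟨l + 1, htl, by omega⟩
      have hSb : flawsT n b (k + 1) = k + 1 := by
        have h := flaws_cons_map n k b hbs hblow hkn
        rw [hback] at h
        omega
      have hbne : b ≠ [] := by
        intro h; rw [h] at hblen; simp at hblen; omega
      obtain ⟨b0, b', hb0⟩ := List.exists_cons_of_ne_nil hbne
      have hb0mem : b0 ∈ b := by rw [hb0]; simp
      have hb0low : k + 1 ≤ b0 := hblow b0 hb0mem
      have hb0all : ∀ x ∈ b, b0 ≤ x := sorted_all_ge b b0 hbs (by rw [hb0]; rfl)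
      have hb0high : b0 ≤ k + 2 := by
        by_contra hc
        push_neg at hc
        have h1 := hbhigh b0 hb0mem
        have heq := flawsT_congr_low n b (k+1) (k+2) (by omega)
          (fun x hx => lt_of_lt_of_le hc (hb0all x hx))
        have h2 := flawsT_lower n b (k+2) (by omega)
        rw [hblen] at h2
        omega
      have hIOP : IsOrderedPrefSet n b :=
        ⟨⟨hblen, fun x hx => ⟨by have := hblow x hx; omega,
          le_trans (hbhigh x hx) hn⟩⟩, hbs⟩
      have himg : eMap k b = (k+2) :: tail := by rw [eMap, hback]
      by_cases hb02 : b0 = k + 2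
      · refine ⟨b, Or.inr ?_, himg⟩
        have hlow2 : ∀ x ∈ b, k + 2 ≤ x := fun x hx => by
          have := hb0all x hx; omega
        have hF : flaws n b = k + 1 := by
          rw [flaws_eq_flawsT n b hbs (fun x hx => by have := hblow x hx; omega)]
          rw [flawsT_congr_low n b 0 (k+1) (by omega)
            (fun x hx => by have := hlow2 x hx; omega)]
          exact hSb
        exact ⟨hIOP, hF, hbhigh, hbmem, by rw [hb0, hb02]; rfl⟩
      · have hb01 : b0 = k + 1 := by omega
        have hF0 : flaws n b = flawsT n b k := by
          rw [flaws_eq_flawsT n b hbs (fun x hx => by have := hblow x hx; omega)]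
          exact flawsT_congr_low n b 0 k (by omega)
            (fun x hx => by have := hblow x hx; omega)
        have hup : flawsT n b k ≤ flawsT n b (k+1) := flawsT_mono n b k (k+1) (by omega)
        have hdn := flawsT_lower n b k (by omega)
        rw [hblen] at hdn
        by_cases hFk : flawsT n b k = k
        · exact ⟨b, Or.inl (Or.inl ⟨hIOP, by omega, hbhigh, hbmem, by rw [hb0, hb01]; rfl⟩), himg⟩
        · exact ⟨b, Or.inl (Or.inr ⟨hIOP, by omega, hbhigh, hbmem, by rw [hb0, hb01]; rfl⟩), himg⟩
  -- backward inclusion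
  have hmain : ∀ b : List ℕ, IsOrderedPrefSet n b → (∀ x ∈ b, x ≤ l) → l ∈ b →
      (∀ x ∈ b, k + 1 ≤ x) → flawsT n b (k + 1) = k + 1 →
      eMap k b ∈ oSet (n+1) (l+1) (k+1) (k+2) := by
    rintro b ⟨⟨hlen, hbd⟩, hsort⟩ hle hlm hlow hflT
    have hsorted2 : (eMap k b).Pairwise (· ≤ ·) := by
      rw [eMap, List.pairwise_cons]
      constructor
      · intro y hy
        rcases List.mem_map.mp hy with ⟨x, hx, rfl⟩
        have := hlow x hx; omega
      · exact List.Pairwise.map _ (fun u v h => by omega) hsort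
    simp only [oSet, Set.mem_setOf_eq]
    refine ⟨⟨⟨by simp [eMap, hlen], ?_⟩, hsorted2⟩, ?_, ?_, ?_, rfl⟩
    · intro x hx
      simp only [eMap] at hx
      rcases List.mem_cons.mp hx with rfl | hx
      · omega
      · rcases List.mem_map.mp hx with ⟨y, hy, rfl⟩
        have := (hbd y hy).2; omega
    · rw [show eMap k b = (k+2) :: b.map (fun x => x + 1) from rfl]
      rw [flaws_cons_map n k b hsort hlow hkn]
      exact hflT
    · intro x hx
      simp only [eMap] at hx
      rcases List.mem_cons.mp hx with rfl | hx
      · omega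
      · rcases List.mem_map.mp hx with ⟨y, hy, rfl⟩
        have := hle y hy; omega
    · exact List.mem_cons_of_mem _ (List.mem_map.mpr ⟨l, hlm, rfl⟩)
  have hbwd : eMap k '' (oSet n l k (k+1) ∪ oSet n l (k+1) (k+1) ∪ oSet n l (k+1) (k+2))
      ⊆ oSet (n+1) (l+1) (k+1) (k+2) := by
    rintro x ⟨b, hb, rfl⟩
    rcases hb with (h1 | h2) | h3
    · obtain ⟨hIOP, hfl, hle, hlm, hh⟩ := h1
      have hlow := sorted_all_ge b (k+1) hIOP.2 hh
      have hF0 : flaws n b = flawsT n b k := by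
        rw [flaws_eq_flawsT n b hIOP.2 (fun x hx => by have := hlow x hx; omega)]
        exact flawsT_congr_low n b 0 k (by omega)
          (fun x hx => by have := hlow x hx; omega)
      have hup := flawsT_le_max n b k (k+1) (k+1) (by omega) (by omega)
        (by have := hIOP.1.1; omega)
      have hdn := flawsT_lower n b (k+1) (by omega)
      have hln := hIOP.1.1
      exact hmain b hIOP hle hlm hlow (by omega)
    · obtain ⟨hIOP, hfl, hle, hlm, hh⟩ := h2
      have hlow := sorted_all_ge b (k+1) hIOP.2 hh
      have hF0 : flaws n b = flawsT n b k := by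
        rw [flaws_eq_flawsT n b hIOP.2 (fun x hx => by have := hlow x hx; omega)]
        exact flawsT_congr_low n b 0 k (by omega)
          (fun x hx => by have := hlow x hx; omega)
      have hup := flawsT_le_max n b k (k+1) (k+1) (by omega) (by omega)
        (by have := hIOP.1.1; omega)
      have hdn := flawsT_lower n b (k+1) (by omega)
      have hln := hIOP.1.1
      exact hmain b hIOP hle hlm hlow (by omega)
    · obtain ⟨hIOP, hfl, hle, hlm, hh⟩ := h3
      have hlow := sorted_all_ge b (k+2) hIOP.2 hh
      have hflT : flawsT n b (k+1) = k + 1 := by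
        rw [← flawsT_congr_low n b 0 (k+1) (by omega)
          (fun x hx => by have := hlow x hx; omega)]
        rw [← flaws_eq_flawsT n b hIOP.2 (fun x hx => by have := hlow x hx; omega)]
        exact hfl
      exact hmain b hIOP hle hlm (fun x hx => by have := hlow x hx; omega) hflT
  have key : oSet (n+1) (l+1) (k+1) (k+2)
      = eMap k '' (oSet n l k (k+1) ∪ oSet n l (k+1) (k+1) ∪ oSet n l (k+1) (k+2)) :=
    Set.Subset.antisymm hfwd hbwd
  have hinj : Function.Injective (eMap k) := by
    intro x y hxy
    simp only [eMap, List.cons.injEq, true_and] at hxy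
    exact List.map_injective_iff.mpr (fun u v h => by omega) hxy
  have hfin : ∀ f m : ℕ, (oSet n l f m).Finite := by
    intro f m
    apply Set.Finite.subset (finite_bdd n n)
    rintro b ⟨⟨⟨hlen, hbd⟩, -⟩, -⟩
    exact ⟨hlen, fun x hx => (hbd x hx).2⟩
  have hd12 : Disjoint (oSet n l k (k+1)) (oSet n l (k+1) (k+1)) := by
    rw [Set.disjoint_left]
    rintro b ⟨-, h1, -⟩ ⟨-, h2, -⟩
    omega
  have hd3 : Disjoint (oSet n l k (k+1) ∪ oSet n l (k+1) (k+1)) (oSet n l (k+1) (k+2)) := by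
    rw [Set.disjoint_left]
    rintro b (⟨-, h1, -, -, hh1⟩ | ⟨-, h1, -, -, hh1⟩) ⟨-, h2, -, -, hh2⟩
    · omega
    · rw [hh1] at hh2
      have := Option.some.inj hh2
      omega
  show (oSet (n+1) (l+1) (k+1) (k+2)).ncard
      = (oSet n l k (k+1)).ncard + (oSet n l (k+1) (k+1)).ncard
        + (oSet n l (k+1) (k+2)).ncard
  rw [key, Set.ncard_image_of_injective _ hinj]
  rw [Set.ncard_union_eq hd3 ((hfin _ _).union (hfin _ _)) (hfin _ _)]
  rw [Set.ncard_union_eq hd12 (hfin _ _) (hfin _ _)]
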